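/- Let (G, ≤) be a semiclosed partially ordered torsion-free abelian group, E a maximal independent set in G, ⟨E⟩ the subgroup of G generated by E, and φ : G → ⊕_E ℚ an injective additive group homomorphism with φ(a) = e_a for all a ∈ E. Let G₊ := {g ∈ G | 0 ≤ g}. Then the rational convex hull of φ[G₊ ∩ ⟨E⟩] in ⊕_E ℚ intersected with φ[G] equals φ[G₊]: conv_ℚ(φ[G₊ ∩ ⟨E⟩]) ∩ φ[G] = φ[G₊]. -/

import Mathlib

/-- A maximal independent set in an abelian group `G`. -/
def MaxIndependent {G : Type*} [AddCommGroup G] (E : Set G) : Prop :=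
  LinearIndependent ℤ (fun a : E => (a : G)) ∧
  ∀ E' : Set G, E ⊆ E' → LinearIndependent ℤ (fun a : E' => (a : G)) → E' = E

open Finset in
private lemma exists_pos_smul_mem {G : Type*} [AddCommGroup G] {E : Set G}
    (hE : MaxIndependent E) (g : G) :
    ∃ n : ℤ, 0 < n ∧ n • g ∈ Submodule.span ℤ E := by
  by_cases hg : g ∈ E
  · exact ⟨1, one_pos, by simpa using Submodule.subset_span hg⟩
  have key : ∃ n : ℤ, n ≠ 0 ∧ n • g ∈ Submodule.span ℤ E := by
    by_contra h
    push_neg at h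
    have hind : LinearIndependent ℤ (fun x : (insert g E : Set G) => (x : G)) := by
      classical
      refine (linearIndepOn_iff (v := id)).mpr ?_
      intro l hl hl0
      rw [Finsupp.mem_supported] at hl
      have hlg : l g = 0 := by
        by_contra hn
        apply h (l g) hn
        have hsplit : l = Finsupp.single g (l g) + l.erase g :=
          (Finsupp.single_add_erase g l).symm
        rw [hsplit, map_add, Finsupp.linearCombination_single, id_eq] at hl0
        have hmem : Finsupp.linearCombination ℤ (id : G → G) (l.erase g) ∈
            Submodule.span ℤ E := by
          rw [Finsupp.linearCombination_apply]
          refine Submodule.sum_mem _ fun a ha => ?_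
          have ha' : (l.erase g) a ≠ 0 := Finsupp.mem_support_iff.mp ha
          have hag : a ≠ g := fun hag => ha' (hag ▸ Finsupp.erase_same)
          have hal : a ∈ l.support := by
            rw [Finsupp.mem_support_iff]
            rwa [Finsupp.erase_ne hag] at ha'
          exact Submodule.smul_mem _ _ (Submodule.subset_span
            ((Set.mem_insert_iff.mp (hl hal)).resolve_left hag))
        rw [eq_neg_of_add_eq_zero_left hl0]
        exact Submodule.neg_mem _ hmem
      have hsupp : l ∈ Finsupp.supported ℤ ℤ E := by
        rw [Finsupp.mem_supported]
        intro a ha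
        have ha' : a ∈ l.support := Finset.mem_coe.mp ha
        have hag : a ≠ g := fun hag => (Finsupp.mem_support_iff.mp ha') (hag ▸ hlg)
        exact (Set.mem_insert_iff.mp (hl ha')).resolve_left hag
      exact (linearIndepOn_iff (v := id)).mp hE.1 l hsupp hl0
    have heq := hE.2 (insert g E) (Set.subset_insert g E) hind
    exact hg (heq ▸ Set.mem_insert g E)
  obtain ⟨n, hn, hmem⟩ := key
  rcases hn.lt_or_gt with h | h
  · exact ⟨-n, by omega, by rw [neg_smul]; exact Submodule.neg_mem _ hmem⟩
  · exact ⟨n, h, hmem⟩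

/-- for a semiclosed po-group order on a torsion-free abelian group `G`,
the rational convex hull of `φ[G₊ ∩ ⟨E⟩]` intersected with `φ[G]` equals `φ[G₊]`. -/
theorem stmt10 {G : Type*} [AddCommGroup G]
    (htf : ∀ (n : ℤ) (g : G), n • g = 0 → n ≠ 0 → g = 0)
    (le : G → G → Prop) (hpo : IsPartialOrder G le)
    (hcomp : ∀ a b c : G, le a b → le (a + c) (b + c))
    (hsemi : ∀ (n : ℤ) (g : G), 1 ≤ n → le 0 (n • g) → le 0 g)
    (E : Set G) (hE : MaxIndependent E)
    (φ : G →+ (E →₀ ℚ)) (hφinj : Function.Injective φ)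
    (hφE : ∀ a : E, φ (a : G) = Finsupp.single a 1) :
    convexHull ℚ (φ '' ({g : G | le 0 g} ∩ (AddSubgroup.closure E : Set G))) ∩
        Set.range φ
      = φ '' {g : G | le 0 g} := by
  classical
  have add_nonneg' : ∀ a b : G, le 0 a → le 0 b → le 0 (a + b) := by
    intro a b ha hb
    have h1 := hcomp 0 a b ha
    rw [zero_add] at h1
    exact hpo.trans _ _ _ hb h1
  have nsmul_nonneg' : ∀ (g : G), le 0 g → ∀ k : ℕ, le 0 (k • g) := by
    intro g hg k
    induction k with
    | zero => simpa using hpo.refl 0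
    | succ k ih =>
      rw [succ_nsmul]
      exact add_nonneg' _ _ ih hg
  apply Set.Subset.antisymm
  · rintro x ⟨hconv, g, rfl⟩
    refine ⟨g, ?_, rfl⟩
    rw [_root_.convexHull_eq] at hconv
    obtain ⟨ι, t, w, z, hw0, hw1, hz, hx⟩ := hconv
    choose! hfun hhprop hheq using fun i hi => (hz i hi : z i ∈ _)
    set N : ℕ := ∏ i ∈ t, (w i).den with hN
    have hNpos : 0 < N := Finset.prod_pos fun i _ => (w i).pos
    have hden : ∀ i ∈ t, ∃ c : ℤ, 0 ≤ c ∧ (c : ℚ) = (N : ℚ) * w i := by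
      intro i hi
      obtain ⟨k, hk⟩ := Finset.dvd_prod_of_mem (fun i => (w i).den) hi
      refine ⟨(w i).num * k, mul_nonneg (Rat.num_nonneg.mpr (hw0 i hi)) (Int.ofNat_nonneg k), ?_⟩
      rw [hN, hk]
      push_cast
      rw [mul_comm ((w i).den : ℚ) (k : ℚ), mul_assoc, mul_comm ((w i).den : ℚ) (w i),
        Rat.mul_den_eq_num, mul_comm]
    choose! c hc0 hceq using hden
    have key : (N : ℚ) • (φ g) = ∑ i ∈ t, (c i : ℚ) • z i := by
      rw [← hx, Finset.centerMass, hw1, inv_one, one_smul, Finset.smul_sum]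
      refine Finset.sum_congr rfl fun i hi => ?_
      rw [smul_smul, ← hceq i hi]
    have hsum : φ ((N : ℤ) • g) = φ (∑ i ∈ t, c i • hfun i) := by
      rw [map_zsmul, map_sum, ← Int.cast_smul_eq_zsmul ℚ, Int.cast_natCast, key]
      refine Finset.sum_congr rfl fun i hi => ?_
      rw [← hheq i hi, map_zsmul, Int.cast_smul_eq_zsmul]
    have hg' : (N : ℤ) • g = ∑ i ∈ t, c i • hfun i := hφinj hsum
    have hsnn : le 0 (∑ i ∈ t, c i • hfun i) := by
      refine Finset.sum_induction _ (fun x => le 0 x) add_nonneg' (hpo.refl 0) ?_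
      intro i hi
      have h1 : c i • hfun i = (c i).toNat • hfun i := by
        rw [← Int.toNat_of_nonneg (hc0 i hi), natCast_zsmul, Int.toNat_natCast]
      rw [h1]
      exact nsmul_nonneg' _ (hhprop i hi).1 _
    exact hsemi (N : ℤ) g (by exact_mod_cast hNpos) (hg' ▸ hsnn)
  · rintro x ⟨g, hg, rfl⟩
    refine ⟨?_, g, rfl⟩
    obtain ⟨n, hn, hmem⟩ := exists_pos_smul_mem hE g
    have hmem' : n • g ∈ AddSubgroup.closure E := by
      rw [← Submodule.span_int_eq_addSubgroupClosure]
      exact hmem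
    have hposn : le 0 (n • g) := by
      have := nsmul_nonneg' g hg n.toNat
      rwa [← natCast_zsmul, Int.toNat_of_nonneg hn.le] at this
    have hin : φ (n • g) ∈ φ '' ({g : G | le 0 g} ∩ (AddSubgroup.closure E : Set G)) :=
      ⟨n • g, ⟨hposn, hmem'⟩, rfl⟩
    have h0 : (0 : E →₀ ℚ) ∈ φ '' ({g : G | le 0 g} ∩ (AddSubgroup.closure E : Set G)) :=
      ⟨0, ⟨hpo.refl 0, AddSubgroup.zero_mem _⟩, map_zero φ⟩
    have hn1 : (1 : ℚ) ≤ (n : ℚ) := by exact_mod_cast hn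
    have hinv0 : (0 : ℚ) ≤ (n : ℚ)⁻¹ := inv_nonneg.mpr (by linarith)
    have hconv := (convex_convexHull ℚ _)
      (subset_convexHull ℚ _ hin) (subset_convexHull ℚ _ h0)
      hinv0 (by rw [sub_nonneg]; exact inv_le_one_of_one_le₀ hn1 : (0:ℚ) ≤ 1 - (n : ℚ)⁻¹)
      (by ring)
    have heq : (n : ℚ)⁻¹ • φ (n • g) + (1 - (n : ℚ)⁻¹) • (0 : E →₀ ℚ) = φ g := by
      rw [smul_zero, add_zero, map_zsmul, ← Int.cast_smul_eq_zsmul ℚ,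
        inv_smul_smul₀ (by positivity)]
    rwa [heq] at hconv
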